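/- Let τ : ℕ → ℕ be a sequence of delays with τ_m ≤ τ_max for all m, and suppose that for every K ≥ 1 and every window of Kn consecutive indices, at most n indices m in that window satisfy τ_m > Kn. Then for any t, the sum over m from 1 to τ_max of the indicator of the event {τ_{t+m} ≥ m} is at most 2√(τ_max · n). -/

import Mathlib

lemma aux_sq_le_two_pow : ∀ k : ℕ, (k + 4) ^ 2 ≤ 2 ^ (k + 4) := by
  intro k
  induction k with
  | zero => norm_num
  | succ k ih =>
    have h1 : (k + 1 + 4) ^ 2 ≤ 2 * (k + 4) ^ 2 := by nlinarith [sq_nonneg k, k.zero_le]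
    calc (k + 1 + 4) ^ 2 ≤ 2 * (k + 4) ^ 2 := h1
      _ ≤ 2 * 2 ^ (k + 4) := by omega
      _ = 2 ^ (k + 1 + 4) := by ring

lemma aux_card (n : ℕ) (hn : 0 < n) (τ : ℕ → ℕ)
    (hcontention : ∀ K : ℕ, 1 ≤ K → ∀ t0 : ℕ,
      ((Finset.Ico t0 (t0 + K * n)).filter (fun m => K * n < τ m)).card ≤ n)
    (t : ℕ) :
    ∀ J T : ℕ, T ≤ 2 ^ J * n →
      ((Finset.Icc 1 T).filter (fun m => m ≤ τ (t + m))).card ≤ (J + 1) * n := by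
  intro J
  induction J with
  | zero =>
    intro T hT
    calc ((Finset.Icc 1 T).filter (fun m => m ≤ τ (t + m))).card
        ≤ (Finset.Icc 1 T).card := Finset.card_filter_le _ _
      _ = T := by rw [Nat.card_Icc]; omega
      _ ≤ 1 * n := by simpa using hT
  | succ J ih =>
    intro T hT
    by_cases h : T ≤ 2 ^ J * n
    · exact (ih T h).trans (Nat.mul_le_mul_right n (by omega))
    · push_neg at h
      have hsplit : Finset.Icc 1 T = Finset.Icc 1 (2 ^ J * n) ∪ Finset.Ioc (2 ^ J * n) T :=
        Finset.ext fun x => by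
          simp only [Finset.mem_Icc, Finset.mem_Ioc, Finset.mem_union]
          omega
      rw [hsplit, Finset.filter_union]
      have hsecond : ((Finset.Ioc (2 ^ J * n) T).filter (fun m => m ≤ τ (t + m))).card ≤ n := by
        have hK : 1 ≤ 2 ^ J := Nat.one_le_two_pow
        have hcon := hcontention (2 ^ J) hK (t + 2 ^ J * n + 1)
        refine le_trans ?_ hcon
        apply Finset.card_le_card_of_injOn (fun m => t + m)
        · intro m hm
          dsimp only
          simp only [Finset.coe_filter, Set.mem_setOf_eq, Finset.mem_coe, Finset.mem_filter, Finset.mem_Ioc] at hm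
          obtain ⟨⟨h1, h2⟩, h3⟩ := hm
          have hT2 : T ≤ 2 ^ J * n + 2 ^ J * n := by
            have : 2 ^ (J + 1) * n = 2 ^ J * n + 2 ^ J * n := by ring
            omega
          simp only [Finset.coe_filter, Set.mem_setOf_eq, Finset.mem_coe, Finset.mem_filter, Finset.mem_Ico]
          refine ⟨⟨by omega, by omega⟩, by omega⟩
        · intro a _ b _ hab
          dsimp only at hab
          omega
      calc (((Finset.Icc 1 (2 ^ J * n)).filter (fun m => m ≤ τ (t + m))) ∪
              ((Finset.Ioc (2 ^ J * n) T).filter (fun m => m ≤ τ (t + m)))).card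
          ≤ ((Finset.Icc 1 (2 ^ J * n)).filter (fun m => m ≤ τ (t + m))).card +
              ((Finset.Ioc (2 ^ J * n) T).filter (fun m => m ≤ τ (t + m))).card :=
            Finset.card_union_le _ _
        _ ≤ (J + 1) * n + n := add_le_add (ih _ le_rfl) hsecond
        _ = (J + 1 + 1) * n := by ring

theorem stmt_1 (n τmax : ℕ) (hn : 0 < n) (τ : ℕ → ℕ)
    (hbound : ∀ m, τ m ≤ τmax)
    (hcontention : ∀ K : ℕ, 1 ≤ K → ∀ t0 : ℕ,
      ((Finset.Ico t0 (t0 + K * n)).filter (fun m => K * n < τ m)).card ≤ n)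
    (t : ℕ) :
    (∑ m ∈ Finset.Icc 1 τmax, (if m ≤ τ (t + m) then (1 : ℝ) else 0))
      ≤ 2 * Real.sqrt (τmax * n) := by
  rw [Finset.sum_boole]
  set C := ((Finset.Icc 1 τmax).filter (fun m => m ≤ τ (t + m))).card with hC
  have hkey : C ^ 2 ≤ 4 * (τmax * n) := by
    by_cases hc : τmax ≤ 4 * n
    · have hCt : C ≤ τmax := by
        calc C ≤ (Finset.Icc 1 τmax).card := Finset.card_filter_le _ _
          _ = τmax := by rw [Nat.card_Icc]; omega
      nlinarith
    · push_neg at hc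
      have hex : ∃ j, τmax ≤ 2 ^ j * n := by
        refine ⟨τmax, ?_⟩
        calc τmax ≤ 2 ^ τmax := (Nat.lt_two_pow_self (n := τmax)).le
          _ ≤ 2 ^ τmax * n := Nat.le_mul_of_pos_right _ hn
      set J := Nat.find hex with hJdef
      have hJ : τmax ≤ 2 ^ J * n := Nat.find_spec hex
      have hCb : C ≤ (J + 1) * n := aux_card n hn τ hcontention t J τmax hJ
      have hJ3 : 3 ≤ J := by
        by_contra hlt
        push_neg at hlt
        have h2J : 2 ^ J ≤ 4 := by interval_cases J <;> norm_num
        have : τmax ≤ 4 * n := hJ.trans (Nat.mul_le_mul_right n h2J)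
        omega
      have hmin : 2 ^ (J - 1) * n < τmax := by
        have := Nat.find_min hex (show J - 1 < J by omega)
        omega
      have hsq : (J + 1) ^ 2 ≤ 2 ^ (J + 1) := by
        have := aux_sq_le_two_pow (J - 3)
        have he : J - 3 + 4 = J + 1 := by omega
        rwa [he] at this
      have hpow : 2 ^ (J + 1) = 4 * 2 ^ (J - 1) := by
        rw [show J + 1 = (J - 1) + 2 by omega, pow_add]
        ring
      calc C ^ 2 ≤ ((J + 1) * n) ^ 2 := Nat.pow_le_pow_left hCb 2
        _ = (J + 1) ^ 2 * n ^ 2 := by ring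
        _ ≤ 2 ^ (J + 1) * n ^ 2 := Nat.mul_le_mul_right _ hsq
        _ = 4 * (2 ^ (J - 1) * n) * n := by rw [hpow]; ring
        _ ≤ 4 * (τmax * n) := by nlinarith
  have h1 : ((C : ℝ)) ^ 2 ≤ 4 * (τmax * n) := by exact_mod_cast hkey
  have hs := Real.sq_sqrt (show (0:ℝ) ≤ (τmax : ℝ) * n by positivity)
  have hsn := Real.sqrt_nonneg ((τmax : ℝ) * n)
  have hCn : (0:ℝ) ≤ (C : ℝ) := Nat.cast_nonneg C
  nlinarith [h1, hs, hsn, hCn, sq_nonneg ((C : ℝ) - 2 * Real.sqrt ((τmax : ℝ) * n)),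
    sq_nonneg ((C : ℝ) + 2 * Real.sqrt ((τmax : ℝ) * n))]
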